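/- The lattice of all filters of a pseudo hoop is a distributive lattice under inclusion; moreover it satisfies the infinite distributive law F ∩ ⋁ᵢ Fᵢ = ⋁ᵢ (F ∩ Fᵢ). -/

import Mathlib

universe u

structure PseudoHoop (M : Type u) where
  mul : M → M → M
  one : M
  imp : M → M → M
  rimp : M → M → M
  mul_one : ∀ x, mul x one = x
  one_mul : ∀ x, mul one x = x
  imp_self : ∀ x, imp x x = one
  rimp_self : ∀ x, rimp x x = one
  mul_imp : ∀ x y z, imp (mul x y) z = imp x (imp y z)
  mul_rimp : ∀ x y z, rimp (mul x y) z = rimp y (rimp x z)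
  div1 : ∀ x y, mul (imp x y) x = mul (imp y x) y
  div2 : ∀ x y, mul (imp x y) x = mul x (rimp x y)
  div3 : ∀ x y, mul x (rimp x y) = mul y (rimp y x)

namespace PseudoHoop

variable {M : Type u} (H : PseudoHoop M)

/-- The induced order: x ≤ y iff x → y = 1. -/
def le (x y : M) : Prop := H.imp x y = H.one

/-- The derived meet: x ∧ y = (x → y) ⊙ x. -/
def meet (x y : M) : M := H.mul (H.imp x y) x

/-- Powers: a^0 = 1, a^(n+1) = a^n ⊙ a. -/
def pow (a : M) : ℕ → M
  | 0 => H.one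
  | n + 1 => H.mul (pow a n) a

/-- j is the least upper bound of x and y. -/
def IsJoin (x y j : M) : Prop :=
  H.le x j ∧ H.le y j ∧ ∀ c, H.le x c → H.le y c → H.le j c

/-- Prelinearity: (x→y) ∨ (y→x) and (x⇝y) ∨ (y⇝x) exist and equal 1. -/
def Prelinear : Prop :=
  ∀ x y, H.IsJoin (H.imp x y) (H.imp y x) H.one ∧ H.IsJoin (H.rimp x y) (H.rimp y x) H.one

/-- Basic pseudo hoop. -/
def Basic : Prop :=
  (∀ x y z, H.le (H.imp (H.imp x y) z) (H.imp (H.imp (H.imp y x) z) z)) ∧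
  (∀ x y z, H.le (H.rimp (H.rimp x y) z) (H.rimp (H.rimp (H.rimp y x) z) z))

/-- Filters: contain 1, closed under ⊙ and upward closed. -/
def IsFilter (F : Set M) : Prop :=
  H.one ∈ F ∧ (∀ x ∈ F, ∀ y ∈ F, H.mul x y ∈ F) ∧ (∀ x ∈ F, ∀ y, H.le x y → y ∈ F)

/-- Filter generated by a set. -/
def filterGen (S : Set M) : Set M := ⋂₀ {F | H.IsFilter F ∧ S ⊆ F}

/-- Prime filter. -/
def IsPrime (F : Set M) : Prop :=
  H.IsFilter F ∧
    ∀ F₁ F₂, H.IsFilter F₁ → H.IsFilter F₂ → F₁ ∩ F₂ ⊆ F → F₁ ⊆ F ∨ F₂ ⊆ F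

/-- V is a value of g: a filter maximal with respect to not containing g. -/
def IsValueOf (V : Set M) (g : M) : Prop :=
  H.IsFilter V ∧ g ∉ V ∧ ∀ W, H.IsFilter W → V ⊆ W → g ∉ W → W = V

/-- V is a value of M: a value of some g ≠ 1. -/
def IsValue (V : Set M) : Prop := ∃ g, g ≠ H.one ∧ H.IsValueOf V g

end PseudoHoop

namespace PseudoHoop

variable {M : Type u} (H : PseudoHoop M)

theorem le_refl (x : M) : H.le x x := H.imp_self x

theorem imp_one_imp (x y : M) : H.imp x y = H.imp H.one (H.imp x y) := by
  have h := H.mul_imp H.one x y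
  rwa [H.one_mul] at h

theorem le_iff_rimp {x y : M} : H.le x y ↔ H.rimp x y = H.one := by
  constructor
  · intro h
    have h' : H.imp x y = H.one := h
    have hx : H.mul x (H.rimp x y) = x := by
      have h2 := H.div2 x y
      rw [h', H.one_mul] at h2
      exact h2.symm
    have h3 := H.mul_rimp x (H.rimp x y) y
    rw [hx, H.rimp_self] at h3
    exact h3
  · intro h
    have hx : H.mul (H.imp x y) x = x := by
      have h2 := H.div2 x y
      rw [h, H.mul_one] at h2
      exact h2
    have h3 := H.mul_imp (H.imp x y) x y
    rw [hx, H.imp_self] at h3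
    exact h3

theorem u_imp_one (x : M) : H.imp (H.imp H.one x) H.one = H.one := by
  have d := H.div1 x H.one
  rw [H.mul_one] at d
  have h := H.mul_imp (H.imp x H.one) x H.one
  rw [d, H.imp_self] at h
  exact h

theorem le_one_imp (x : M) : H.imp x (H.imp H.one x) = H.one := by
  have h := H.mul_imp x H.one x
  rw [H.mul_one, H.imp_self] at h
  exact h.symm

theorem imp_one (x : M) : H.imp x H.one = H.one := by
  have hxu := H.le_one_imp x
  have d := H.div1 x (H.imp H.one x)
  rw [hxu, H.one_mul] at d
  have h := H.mul_imp (H.imp (H.imp H.one x) x) (H.imp H.one x) H.one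
  rw [← d, H.u_imp_one] at h
  have h2 := H.u_imp_one (H.imp (H.imp H.one x) x)
  have h3 := H.imp_one_imp (H.imp H.one x) x
  rw [← h3] at h2
  rw [h2] at h
  exact h

theorem le_one (x : M) : H.le x H.one := H.imp_one x

theorem rimp_one (x : M) : H.rimp x H.one = H.one := (H.le_iff_rimp).mp (H.le_one x)

theorem eq_mul_rimp_of_le {a b : M} (h : H.le a b) : a = H.mul b (H.rimp b a) := by
  have h' : H.imp a b = H.one := h
  have d2 := H.div2 a b
  rw [h', H.one_mul] at d2
  exact d2.trans (H.div3 a b)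

theorem le_trans {a b c : M} (h1 : H.le a b) (h2 : H.le b c) : H.le a c := by
  have ha : a = H.mul b (H.rimp b a) := H.eq_mul_rimp_of_le h1
  have hb : b = H.mul c (H.rimp c b) := H.eq_mul_rimp_of_le h2
  have hbc : H.rimp b c = H.one := by
    have h := H.mul_rimp c (H.rimp c b) c
    rw [← hb, H.rimp_self, H.rimp_one] at h
    exact h
  have h' := H.mul_rimp b (H.rimp b a) c
  rw [← ha, hbc, H.rimp_one] at h'
  exact (H.le_iff_rimp).mpr h'

theorem le_antisymm {a b : M} (h1 : H.le a b) (h2 : H.le b a) : a = b := by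
  have h1' : H.imp a b = H.one := h1
  have h2' : H.imp b a = H.one := h2
  have d := H.div1 a b
  rw [h1', h2', H.one_mul, H.one_mul] at d
  exact d

theorem eq_one_of_one_le {a : M} (h : H.le H.one a) : a = H.one :=
  H.le_antisymm (H.le_one a) h

theorem mul_le_left (x y : M) : H.le (H.mul x y) x := by
  rw [H.le_iff_rimp]
  have h := H.mul_rimp x y x
  rw [H.rimp_self, H.rimp_one] at h
  exact h

theorem mul_le_right (x y : M) : H.le (H.mul x y) y := by
  show H.imp (H.mul x y) y = H.one
  rw [H.mul_imp, H.imp_self, H.imp_one]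

theorem le_imp_mul (b c : M) : H.le b (H.imp c (H.mul b c)) := by
  have h := H.mul_imp b c (H.mul b c)
  rw [H.imp_self] at h
  exact h.symm

theorem le_rimp_mul (b c : M) : H.le c (H.rimp b (H.mul b c)) := by
  have h := H.mul_rimp b c (H.mul b c)
  rw [H.rimp_self] at h
  exact (H.le_iff_rimp).mpr h.symm

theorem le_imp_iff {a b c : M} : H.le (H.mul a b) c ↔ H.le a (H.imp b c) := by
  unfold le
  rw [H.mul_imp]

theorem le_rimp_iff {a b c : M} : H.le (H.mul a b) c ↔ H.le b (H.rimp a c) := by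
  rw [H.le_iff_rimp, H.le_iff_rimp, H.mul_rimp]

theorem mul_le_mul_left {a b : M} (h : H.le a b) (c : M) :
    H.le (H.mul a c) (H.mul b c) := by
  rw [H.le_imp_iff]
  exact H.le_trans h (H.le_imp_mul b c)

theorem mul_le_mul_right {a b : M} (h : H.le a b) (c : M) :
    H.le (H.mul c a) (H.mul c b) := by
  rw [H.le_rimp_iff]
  exact H.le_trans h (H.le_rimp_mul c b)

theorem mul_assoc_le (a u v : M) :
    H.le (H.mul a (H.mul u v)) (H.mul (H.mul a u) v) := by
  rw [H.le_iff_rimp, H.mul_rimp, H.mul_rimp,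
    ← H.mul_rimp a u (H.mul (H.mul a u) v),
    ← H.mul_rimp (H.mul a u) v (H.mul (H.mul a u) v), H.rimp_self]

theorem riesz {a b c : M} (h : H.le (H.mul b c) a) :
    ∃ b₁ c₁, H.le b b₁ ∧ H.le c c₁ ∧ H.le a b₁ ∧ H.le a c₁ ∧ a = H.mul b₁ c₁ := by
  refine ⟨H.imp c a, H.rimp (H.imp c a) a, ?_, ?_, ?_, ?_, ?_⟩
  · exact (H.le_imp_iff).mp h
  · refine (H.le_rimp_iff).mp ?_
    rw [H.div1]
    exact H.mul_le_right (H.imp a c) a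
  · exact (H.le_imp_iff).mp (H.mul_le_left a c)
  · exact (H.le_rimp_iff).mp (H.mul_le_right (H.imp c a) a)
  · have d3 := H.div3 (H.imp c a) a
    have hab : H.rimp a (H.imp c a) = H.one :=
      (H.le_iff_rimp).mp ((H.le_imp_iff).mp (H.mul_le_left a c))
    rw [hab, H.mul_one] at d3
    exact d3.symm

end PseudoHoop

/-- Product of a list of elements of a pseudo hoop. -/
def PseudoHoop.listProd {M : Type u} (H : PseudoHoop M) : List M → M
  | [] => H.one
  | a :: l => H.mul a (H.listProd l)

namespace PseudoHoop

variable {M : Type u} (H : PseudoHoop M)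

theorem listProd_append_le (l₁ l₂ : List M) :
    H.le (H.listProd (l₁ ++ l₂)) (H.mul (H.listProd l₁) (H.listProd l₂)) := by
  induction l₁ with
  | nil =>
    simp only [List.nil_append, listProd]
    rw [H.one_mul]
    exact H.le_refl _
  | cons a l ih =>
    simp only [List.cons_append, listProd]
    exact H.le_trans (H.mul_le_mul_right ih a) (H.mul_assoc_le a _ _)

theorem listProd_mem {F : Set M} (hF : H.IsFilter F) (l : List M)
    (h : ∀ a ∈ l, a ∈ F) : H.listProd l ∈ F := by
  induction l with
  | nil => exact hF.1
  | cons a t ih =>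
    exact hF.2.1 a (h a List.mem_cons_self) _
      (ih fun b hb => h b (List.mem_cons_of_mem a hb))

/-- Explicit description of the filter generated by a set. -/
def genSet (S : Set M) : Set M :=
  {x | ∃ l : List M, (∀ a ∈ l, a ∈ S) ∧ H.le (H.listProd l) x}

theorem genSet_isFilter (S : Set M) : H.IsFilter (H.genSet S) := by
  refine ⟨⟨[], by simp, H.le_refl H.one⟩, ?_, ?_⟩
  · rintro x ⟨l₁, h₁, hle₁⟩ y ⟨l₂, h₂, hle₂⟩
    refine ⟨l₁ ++ l₂, ?_, ?_⟩
    · intro a ha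
      rcases List.mem_append.mp ha with h | h
      exacts [h₁ a h, h₂ a h]
    · exact H.le_trans (H.listProd_append_le l₁ l₂)
        (H.le_trans (H.mul_le_mul_left hle₁ _) (H.mul_le_mul_right hle₂ _))
  · rintro x ⟨l, h, hle⟩ y hxy
    exact ⟨l, h, H.le_trans hle hxy⟩

theorem genSet_subset {F S : Set M} (hF : H.IsFilter F) (hS : S ⊆ F) :
    H.genSet S ⊆ F := by
  rintro x ⟨l, h, hle⟩
  exact hF.2.2 _ (H.listProd_mem hF l fun a ha => hS (h a ha)) x hle

theorem subset_genSet (S : Set M) : S ⊆ H.genSet S := by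
  intro a ha
  refine ⟨[a], by simpa using ha, ?_⟩
  show H.le (H.mul a H.one) a
  rw [H.mul_one]
  exact H.le_refl a

theorem filterGen_eq_genSet (S : Set M) : H.filterGen S = H.genSet S := by
  apply Set.Subset.antisymm
  · exact Set.sInter_subset_of_mem ⟨H.genSet_isFilter S, H.subset_genSet S⟩
  · intro x hx
    exact Set.mem_sInter.mpr fun F hF => H.genSet_subset hF.1 hF.2 hx

theorem filterGen_subset_filter {F S : Set M} (hF : H.IsFilter F) (hS : S ⊆ F) :
    H.filterGen S ⊆ F :=
  Set.sInter_subset_of_mem ⟨hF, hS⟩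

theorem filterGen_mono {S T : Set M} (h : S ⊆ T) : H.filterGen S ⊆ H.filterGen T := by
  intro x hx
  exact Set.mem_sInter.mpr fun F hF =>
    Set.mem_sInter.mp hx F ⟨hF.1, Set.Subset.trans h hF.2⟩

theorem riesz_list (l : List M) : ∀ a : M, H.le (H.listProd l) a →
    ∃ l', List.Forall₂ H.le l l' ∧ (∀ b ∈ l', H.le a b) ∧ a = H.listProd l' := by
  induction l with
  | nil =>
    intro a h
    refine ⟨[], List.Forall₂.nil, by simp, ?_⟩
    exact H.eq_one_of_one_le h
  | cons b t ih =>
    intro a h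
    obtain ⟨b₁, c₁, hbb, htc, hab, hac, haeq⟩ :=
      H.riesz (h : H.le (H.mul b (H.listProd t)) a)
    obtain ⟨l'', f2, hge, heq⟩ := ih c₁ htc
    refine ⟨b₁ :: l'', List.Forall₂.cons hbb f2, ?_, ?_⟩
    · intro x hx
      rcases List.mem_cons.mp hx with rfl | hx
      · exact hab
      · exact H.le_trans hac (hge x hx)
    · simp only [listProd]
      rw [haeq, heq]

theorem mem_target {F S T : Set M}
    (hST : ∀ a ∈ S, ∃ G, H.IsFilter G ∧ a ∈ G ∧ F ∩ G ⊆ T) :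
    ∀ {l l' : List M}, List.Forall₂ H.le l l' → (∀ x ∈ l, x ∈ S) →
      (∀ x ∈ l', x ∈ F) → ∀ b ∈ l', b ∈ T := by
  intro l l' f2
  induction f2 with
  | nil => intro _ _ b hb; simp at hb
  | cons hxy f2' ih =>
    intro hl hF' b hb
    rcases List.mem_cons.mp hb with rfl | hb
    · obtain ⟨G, hG, hxG, hsub⟩ := hST _ (hl _ List.mem_cons_self)
      exact hsub ⟨hF' _ List.mem_cons_self, hG.2.2 _ hxG _ hxy⟩
    · exact ih (fun x hx => hl x (List.mem_cons_of_mem _ hx))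
        (fun x hx => hF' x (List.mem_cons_of_mem _ hx)) b hb

theorem core {F S T : Set M} (hF : H.IsFilter F)
    (hST : ∀ a ∈ S, ∃ G, H.IsFilter G ∧ a ∈ G ∧ F ∩ G ⊆ T)
    (hTF : T ⊆ F) (hTS : T ⊆ S) :
    F ∩ H.filterGen S = H.filterGen T := by
  apply Set.Subset.antisymm
  · rintro a ⟨haF, haS⟩
    rw [H.filterGen_eq_genSet] at haS ⊢
    obtain ⟨l, hl, hle⟩ := haS
    obtain ⟨l', f2, hge, heq⟩ := H.riesz_list l a hle
    refine ⟨l', ?_, ?_⟩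
    · exact H.mem_target hST f2 hl (fun x hx => hF.2.2 a haF x (hge x hx))
    · rw [← heq]
      exact H.le_refl a
  · apply Set.subset_inter
    · exact H.filterGen_subset_filter hF hTF
    · exact H.filterGen_mono hTS

end PseudoHoop

theorem pseudoHoop_filters_distributive {M : Type u} (H : PseudoHoop M) :
    (∀ F G K : Set M, H.IsFilter F → H.IsFilter G → H.IsFilter K →
      F ∩ H.filterGen (G ∪ K) = H.filterGen ((F ∩ G) ∪ (F ∩ K))) ∧
    (∀ (ι : Type u) (F : Set M) (Fi : ι → Set M), H.IsFilter F →
      (∀ i, H.IsFilter (Fi i)) →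
      F ∩ H.filterGen (⋃ i, Fi i) = H.filterGen (⋃ i, F ∩ Fi i)) := by
  constructor
  · intro F G K hF hG hK
    refine H.core hF ?_ ?_ ?_
    · intro a ha
      rcases ha with h | h
      · exact ⟨G, hG, h, Set.subset_union_left⟩
      · exact ⟨K, hK, h, Set.subset_union_right⟩
    · rintro x (⟨h, _⟩ | ⟨h, _⟩) <;> exact h
    · rintro x (⟨_, h⟩ | ⟨_, h⟩)
      · exact Set.mem_union_left _ h
      · exact Set.mem_union_right _ h
  · intro ι F Fi hF hFi
    refine H.core hF ?_ ?_ ?_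
    · intro a ha
      obtain ⟨i, hi⟩ := Set.mem_iUnion.mp ha
      exact ⟨Fi i, hFi i, hi, Set.subset_iUnion (fun j => F ∩ Fi j) i⟩
    · exact Set.iUnion_subset fun i => Set.inter_subset_left
    · exact Set.iUnion_subset fun i =>
        Set.Subset.trans Set.inter_subset_right (Set.subset_iUnion Fi i)
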